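/- In the channel model, define the dynamic-programming value functions: V_{n+1}(σ, u, w) := Σ_{(π,η)} σ(π,η) · (1 − max_{w̃} π(w̃)), and for t = n down to 1, V_t(σ, u, w) := min over φ ∈ (𝒲 × 𝒰 → 𝒳) of Σ_{y,z} Q^f(y | φ(w,u)) · Q^b(z | y) · V_{t+1}(G¹(σ, φ, z, u, w), G²(u, φ, z, w), w) (the minimum over the finite set of such functions). Then for every choice of Markov encoding functions φ_1,…,φ_n : 𝒲 × 𝒰 → 𝒳, the error probability of the resulting scheme with MAP decoding satisfies P_e(φ) = E[1 − max_w P(W = w | Y_{1:n})] ≥ (1/|𝒲|) Σ_w V_1(σ₀, u₁, w), where σ₀ is the point mass at (uniform on 𝒲, w ↦ point mass at u₁). -/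

import Mathlib

open scoped ENNReal Classical
open Finset

namespace NoisyFeedback

variable {W X Y Z U : Type*}

/-- Memory evolution: `mem G2 u1 φ w t zs` is the sender's memory after having
observed the feedback symbols `zs = z_{1:t}`. -/
def mem (G2 : U → (W × U → X) → Z → W → U) (u1 : U) (φ : ℕ → W × U → X) (w : W) :
    (t : ℕ) → (Fin t → Z) → U
  | 0, _ => u1
  | t + 1, zs => G2 (mem G2 u1 φ w t (Fin.init zs)) (φ t) (zs (Fin.last t)) w

variable [Fintype W] [Fintype X] [Fintype Y] [Fintype Z] [Fintype U]

/-- Joint pmf `P(W = w, Y_{1:t} = ys, Z_{1:t} = zs)` of the channel model with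
Markov encoders `φ`. -/
noncomputable def jointP (Qf : X → PMF Y) (Qb : Y → PMF Z)
    (G2 : U → (W × U → X) → Z → W → U) (u1 : U) (φ : ℕ → W × U → X)
    (t : ℕ) (w : W) (ys : Fin t → Y) (zs : Fin t → Z) : ℝ≥0∞ :=
  (Fintype.card W : ℝ≥0∞)⁻¹ *
    ∏ i : Fin t,
      Qf (φ i (w, mem G2 u1 φ w i (fun j => zs (Fin.castLE i.2.le j)))) (ys i) *
        Qb (ys i) (zs i)

/-- `P(Y_{1:t} = ys)`. -/
noncomputable def probY (Qf : X → PMF Y) (Qb : Y → PMF Z)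
    (G2 : U → (W × U → X) → Z → W → U) (u1 : U) (φ : ℕ → W × U → X)
    (t : ℕ) (ys : Fin t → Y) : ℝ≥0∞ :=
  ∑ w : W, ∑ zs : Fin t → Z, jointP Qf Qb G2 u1 φ t w ys zs

/-- `P(W = w, Y_{1:t} = ys)`. -/
noncomputable def probWY (Qf : X → PMF Y) (Qb : Y → PMF Z)
    (G2 : U → (W × U → X) → Z → W → U) (u1 : U) (φ : ℕ → W × U → X)
    (t : ℕ) (ys : Fin t → Y) (w : W) : ℝ≥0∞ :=
  ∑ zs : Fin t → Z, jointP Qf Qb G2 u1 φ t w ys zs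

/-- `P(W = w, Z_{1:t} = zs)`. -/
noncomputable def probWZ (Qf : X → PMF Y) (Qb : Y → PMF Z)
    (G2 : U → (W × U → X) → Z → W → U) (u1 : U) (φ : ℕ → W × U → X)
    (t : ℕ) (w : W) (zs : Fin t → Z) : ℝ≥0∞ :=
  ∑ ys : Fin t → Y, jointP Qf Qb G2 u1 φ t w ys zs

/-- `P(W = w, U_{t+1} = u, Y_{1:t} = ys)` (memory after `t` feedback symbols). -/
noncomputable def probWUY (Qf : X → PMF Y) (Qb : Y → PMF Z)
    (G2 : U → (W × U → X) → Z → W → U) (u1 : U) (φ : ℕ → W × U → X)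
    (t : ℕ) (ys : Fin t → Y) (w : W) (u : U) : ℝ≥0∞ :=
  ∑ zs : Fin t → Z,
    if mem G2 u1 φ w t zs = u then jointP Qf Qb G2 u1 φ t w ys zs else 0


/-- Belief states of the receiver: a belief `π` on the message together with, for each
message `w`, a belief `η w` on the sender's memory. -/
@[reducible] def Belief (W U : Type*) : Type _ := (W → ℝ≥0∞) × (W → U → ℝ≥0∞)

/-- Update map `F¹` of the receiver's belief on the message. -/
noncomputable def F1 (Qf : X → PMF Y) (p : Belief W U) (φ : W × U → X) (y : Y) :
    W → ℝ≥0∞ := fun w =>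
  p.1 w * (∑ u : U, p.2 w u * Qf (φ (w, u)) y) /
    ∑ w' : W, p.1 w' * ∑ u : U, p.2 w' u * Qf (φ (w', u)) y

/-- Update map `F²` of the receiver's conditional belief on the sender's memory. -/
noncomputable def F2 (Qf : X → PMF Y) (Qb : Y → PMF Z)
    (G2 : U → (W × U → X) → Z → W → U) (p : Belief W U) (φ : W × U → X) (y : Y) :
    W → U → ℝ≥0∞ := fun w u' =>
  (∑ u : U, ∑ z : Z,
      p.2 w u * Qf (φ (w, u)) y * Qb y z * (if u' = G2 u φ z w then 1 else 0)) /
    ∑ u : U, p.2 w u * Qf (φ (w, u)) y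

/-- Combined belief update `F = (F¹, F²)`. -/
noncomputable def Fb (Qf : X → PMF Y) (Qb : Y → PMF Z)
    (G2 : U → (W × U → X) → Z → W → U) (p : Belief W U) (φ : W × U → X) (y : Y) :
    Belief W U :=
  (F1 Qf p φ y, F2 Qf Qb G2 p φ y)

/-- Sender belief update `G¹`: update of the sender's belief `σ` over receiver belief
states upon transmitting with encoding function `φ` (with memory `u`, message `w`)
and receiving feedback `z`. -/
noncomputable def G1 (Qf : X → PMF Y) (Qb : Y → PMF Z)
    (G2 : U → (W × U → X) → Z → W → U) (σ : Belief W U → ℝ≥0∞)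
    (φ : W × U → X) (z : Z) (u : U) (w : W) : Belief W U → ℝ≥0∞ := fun b =>
  (∑' p : Belief W U, σ p * ∑ y : Y,
      Qf (φ (w, u)) y * Qb y z * (if b = Fb Qf Qb G2 p φ y then 1 else 0)) /
    ∑ y : Y, Qf (φ (w, u)) y * Qb y z

/-- Initial belief state: uniform on the messages, point mass at `u1` on the memory. -/
noncomputable def b0 [Fintype W] (u1 : U) : Belief W U :=
  (fun _ => (Fintype.card W : ℝ≥0∞)⁻¹, fun _ u => if u = u1 then 1 else 0)

/-- Initial sender belief: point mass at the initial belief state `b0`. -/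
noncomputable def σ0 [Fintype W] (u1 : U) : Belief W U → ℝ≥0∞ := fun b =>
  if b = b0 u1 then 1 else 0

/-- The receiver belief process `(Π_t, H_t)` as a function of the channel outputs,
under the Markov encoders `φ`. -/
noncomputable def beliefs (Qf : X → PMF Y) (Qb : Y → PMF Z)
    (G2 : U → (W × U → X) → Z → W → U) (u1 : U) (φ : ℕ → W × U → X) :
    (t : ℕ) → (Fin t → Y) → Belief W U
  | 0, _ => b0 u1
  | t + 1, ys =>
      Fb Qf Qb G2 (beliefs Qf Qb G2 u1 φ t (Fin.init ys)) (φ t) (ys (Fin.last t))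

/-- Dynamic-programming value functions, indexed by the number `k` of remaining
transmissions: `Vk k = V_{n+1-k}` of the paper, so `Vk 0 = V_{n+1}` is the terminal
cost `Σ_{(π,η)} σ(π,η) (1 - max_w̃ π(w̃))`, and each step minimizes over the (finitely
many) encoding functions `φ : 𝒲 × 𝒰 → 𝒳`. -/
noncomputable def Vk (Qf : X → PMF Y) (Qb : Y → PMF Z)
    (G2 : U → (W × U → X) → Z → W → U) :
    ℕ → (Belief W U → ℝ≥0∞) → U → W → ℝ≥0∞
  | 0, σ, _, _ => ∑' p : Belief W U, σ p * (1 - univ.sup fun w' : W => p.1 w')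
  | k + 1, σ, u, w =>
      ⨅ φ : W × U → X,
        ∑ y : Y, ∑ z : Z,
          Qf (φ (w, u)) y * Qb y z *
            Vk Qf Qb G2 k (G1 Qf Qb G2 σ φ z u w) (G2 u φ z w) w

set_option linter.unusedSectionVars false

section Helpers

variable (Qf : X → PMF Y) (Qb : Y → PMF Z) (G2 : U → (W × U → X) → Z → W → U)
  (u1 : U) (φ : ℕ → W × U → X)

lemma sum_snoc {α : Type*} [Fintype α] {t : ℕ} (g : (Fin (t + 1) → α) → ℝ≥0∞) :
    ∑ f : Fin (t + 1) → α, g f = ∑ p : Fin t → α, ∑ z : α, g (Fin.snoc p z) := by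
  rw [← Equiv.sum_comp (Fin.snocEquiv (fun _ => α)) g, Fintype.sum_prod_type]
  rw [Finset.sum_comm]
  rfl

lemma sum_pmf_one {α : Type*} [Fintype α] (p : PMF α) : ∑ a : α, p a = 1 := by
  have := p.tsum_coe
  rwa [tsum_fintype] at this

lemma jointP_zero (w : W) (ys : Fin 0 → Y) (zs : Fin 0 → Z) :
    jointP Qf Qb G2 u1 φ 0 w ys zs = (Fintype.card W : ℝ≥0∞)⁻¹ := by
  simp [jointP]

lemma jointP_snoc {t : ℕ} (w : W) (ys : Fin t → Y) (y : Y) (zs : Fin t → Z) (z : Z) :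
    jointP Qf Qb G2 u1 φ (t + 1) w (Fin.snoc ys y) (Fin.snoc zs z) =
      jointP Qf Qb G2 u1 φ t w ys zs *
        (Qf (φ t (w, mem G2 u1 φ w t zs)) y * Qb y z) := by
  unfold jointP
  rw [Fin.prod_univ_castSucc, mul_assoc]
  congr 2
  · refine Finset.prod_congr rfl fun i _ => ?_
    simp only [Fin.snoc_castSucc, Fin.coe_castSucc]
    have h1 : (fun j : Fin (i : ℕ) => (Fin.snoc zs z : Fin (t+1) → Z) (Fin.castLE (Fin.castSucc i).2.le j)) =
        (fun j : Fin (i : ℕ) => zs (Fin.castLE i.2.le j)) := by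
      funext j
      have h : (Fin.castLE (Fin.castSucc i).2.le j : Fin (t + 1)) =
          Fin.castSucc (Fin.castLE i.2.le j) := by ext; simp
      rw [h, Fin.snoc_castSucc]
    rw [h1]
  · simp only [Fin.val_last, Fin.snoc_last]
    have h1 : (fun j : Fin t =>
        (Fin.snoc zs z : Fin (t+1) → Z) (Fin.castLE (Fin.last t).2.le j)) = zs := by
      funext j
      have h : (Fin.castLE (Fin.last t).2.le j : Fin (t + 1)) = Fin.castSucc j := by ext; simp
      rw [h, Fin.snoc_castSucc]
    rw [h1]

lemma mem_snoc {t : ℕ} (w : W) (zs : Fin t → Z) (z : Z) :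
    mem G2 u1 φ w (t + 1) (Fin.snoc zs z) = G2 (mem G2 u1 φ w t zs) (φ t) z w := by
  simp [mem]

lemma beliefs_snoc {t : ℕ} (ys : Fin t → Y) (y : Y) :
    beliefs Qf Qb G2 u1 φ (t + 1) (Fin.snoc ys y) =
      Fb Qf Qb G2 (beliefs Qf Qb G2 u1 φ t ys) (φ t) y := by
  simp [beliefs]

lemma sum_comp_mem {t : ℕ} (w : W) (f : (Fin t → Z) → ℝ≥0∞) (g : U → ℝ≥0∞) :
    ∑ zs : Fin t → Z, f zs * g (mem G2 u1 φ w t zs) =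
      ∑ u : U, (∑ zs : Fin t → Z, if mem G2 u1 φ w t zs = u then f zs else 0) * g u := by
  simp only [Finset.sum_mul, ite_mul, zero_mul]
  rw [Finset.sum_comm]
  refine Finset.sum_congr rfl fun zs _ => ?_
  simp

lemma probWY_snoc {t : ℕ} (ys : Fin t → Y) (y : Y) (w : W) :
    probWY Qf Qb G2 u1 φ (t + 1) (Fin.snoc ys y) w =
      ∑ u : U, probWUY Qf Qb G2 u1 φ t ys w u * Qf (φ t (w, u)) y := by
  conv_lhs => rw [probWY]
  rw [sum_snoc]
  have h1 : ∀ zs : Fin t → Z,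
      ∑ z : Z, jointP Qf Qb G2 u1 φ (t + 1) w (Fin.snoc ys y) (Fin.snoc zs z) =
        jointP Qf Qb G2 u1 φ t w ys zs * Qf (φ t (w, mem G2 u1 φ w t zs)) y := by
    intro zs
    simp only [jointP_snoc, ← mul_assoc]
    rw [← Finset.mul_sum, sum_pmf_one, mul_one]
  simp only [h1]
  rw [sum_comp_mem G2 u1 φ w _ (fun u => Qf (φ t (w, u)) y)]
  rfl

lemma probWUY_snoc {t : ℕ} (ys : Fin t → Y) (y : Y) (w : W) (u' : U) :
    probWUY Qf Qb G2 u1 φ (t + 1) (Fin.snoc ys y) w u' =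
      ∑ u : U, ∑ z : Z,
        (if G2 u (φ t) z w = u' then
          probWUY Qf Qb G2 u1 φ t ys w u * (Qf (φ t (w, u)) y * Qb y z) else 0) := by
  conv_lhs => rw [probWUY]
  rw [sum_snoc]
  rw [Finset.sum_comm]
  conv_rhs => rw [Finset.sum_comm]
  refine Finset.sum_congr rfl fun z _ => ?_
  have h1 : ∀ zs : Fin t → Z,
      (if mem G2 u1 φ w (t + 1) (Fin.snoc zs z) = u' then
          jointP Qf Qb G2 u1 φ (t + 1) w (Fin.snoc ys y) (Fin.snoc zs z) else 0) =
        jointP Qf Qb G2 u1 φ t w ys zs *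
          (if G2 (mem G2 u1 φ w t zs) (φ t) z w = u' then
            Qf (φ t (w, mem G2 u1 φ w t zs)) y * Qb y z else 0) := by
    intro zs
    rw [jointP_snoc, mem_snoc]
    split_ifs <;> simp
  simp only [h1]
  rw [sum_comp_mem G2 u1 φ w _
    (fun u => if G2 u (φ t) z w = u' then Qf (φ t (w, u)) y * Qb y z else 0)]
  refine Finset.sum_congr rfl fun u _ => ?_
  rw [mul_ite, mul_zero]
  rfl

lemma sum_probWUY {t : ℕ} (ys : Fin t → Y) (w : W) :
    ∑ u : U, probWUY Qf Qb G2 u1 φ t ys w u = probWY Qf Qb G2 u1 φ t ys w := by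
  simp only [probWUY, probWY]
  rw [Finset.sum_comm]
  simp

lemma probWUY_le {t : ℕ} (ys : Fin t → Y) (w : W) (u : U) :
    probWUY Qf Qb G2 u1 φ t ys w u ≤ probWY Qf Qb G2 u1 φ t ys w := by
  rw [← sum_probWUY Qf Qb G2 u1 φ ys w]
  exact Finset.single_le_sum (fun _ _ => zero_le) (Finset.mem_univ u)

lemma probWY_zero_t (ys : Fin 0 → Y) (w : W) :
    probWY Qf Qb G2 u1 φ 0 ys w = (Fintype.card W : ℝ≥0∞)⁻¹ := by
  simp [probWY, jointP_zero, Finset.sum_const, Finset.card_univ]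

lemma probWY_le_inv {t : ℕ} (ys : Fin t → Y) (w : W) :
    probWY Qf Qb G2 u1 φ t ys w ≤ (Fintype.card W : ℝ≥0∞)⁻¹ := by
  induction t with
  | zero => rw [probWY_zero_t]
  | succ t ih =>
      rw [← Fin.snoc_init_self ys, probWY_snoc]
      calc ∑ u : U, probWUY Qf Qb G2 u1 φ t (Fin.init ys) w u * Qf (φ t (w, u)) (ys (Fin.last t))
          ≤ ∑ u : U, probWUY Qf Qb G2 u1 φ t (Fin.init ys) w u * 1 :=
            Finset.sum_le_sum fun u _ => mul_le_mul_right (PMF.coe_le_one _ _) _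
        _ = probWY Qf Qb G2 u1 φ t (Fin.init ys) w := by
            simp only [mul_one]; exact sum_probWUY Qf Qb G2 u1 φ _ w
        _ ≤ _ := ih _

lemma card_inv_ne_top [Nonempty W] : (Fintype.card W : ℝ≥0∞)⁻¹ ≠ ⊤ := by
  simp [Fintype.card_ne_zero]

lemma probWY_ne_top [Nonempty W] {t : ℕ} (ys : Fin t → Y) (w : W) :
    probWY Qf Qb G2 u1 φ t ys w ≠ ⊤ :=
  ne_top_of_le_ne_top (card_inv_ne_top) (probWY_le_inv Qf Qb G2 u1 φ ys w)

lemma probY_eq_sum (t : ℕ) (ys : Fin t → Y) :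
    probY Qf Qb G2 u1 φ t ys = ∑ w : W, probWY Qf Qb G2 u1 φ t ys w := rfl

lemma probY_ne_top [Nonempty W] {t : ℕ} (ys : Fin t → Y) : probY Qf Qb G2 u1 φ t ys ≠ ⊤ := by
  rw [probY_eq_sum]
  exact (ENNReal.sum_lt_top.2 fun w _ =>
    (probWY_ne_top Qf Qb G2 u1 φ ys w).lt_top).ne

lemma probWY_le_probY {t : ℕ} (ys : Fin t → Y) (w : W) :
    probWY Qf Qb G2 u1 φ t ys w ≤ probY Qf Qb G2 u1 φ t ys := by
  rw [probY_eq_sum]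
  exact Finset.single_le_sum (fun _ _ => zero_le) (Finset.mem_univ w)


lemma ennreal_div_div {a b S : ℝ≥0∞} (hS0 : S ≠ 0) (hSt : S ≠ ⊤) :
    (a / S) / (b / S) = a / b := by
  rw [div_eq_mul_inv a, div_eq_mul_inv b,
    ENNReal.mul_div_mul_right a b (ENNReal.inv_ne_zero.2 hSt) (ENNReal.inv_ne_top.2 hS0)]

lemma probY_snoc_le {t : ℕ} (ys : Fin t → Y) (y : Y) :
    probY Qf Qb G2 u1 φ (t + 1) (Fin.snoc ys y) ≤ probY Qf Qb G2 u1 φ t ys := by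
  rw [probY_eq_sum, probY_eq_sum]
  refine Finset.sum_le_sum fun w _ => ?_
  rw [probWY_snoc]
  calc ∑ u : U, probWUY Qf Qb G2 u1 φ t ys w u * Qf (φ t (w, u)) y
      ≤ ∑ u : U, probWUY Qf Qb G2 u1 φ t ys w u * 1 :=
        Finset.sum_le_sum fun u _ => mul_le_mul_right (PMF.coe_le_one _ _) _
    _ = probWY Qf Qb G2 u1 φ t ys w := by
        simp only [mul_one]; exact sum_probWUY Qf Qb G2 u1 φ _ w

lemma probY_zero_t [Nonempty W] (ys : Fin 0 → Y) : probY Qf Qb G2 u1 φ 0 ys = 1 := by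
  rw [probY_eq_sum]
  simp only [probWY_zero_t, Finset.sum_const, Finset.card_univ, nsmul_eq_mul]
  exact ENNReal.mul_inv_cancel (by exact_mod_cast Fintype.card_ne_zero)
    (ENNReal.natCast_ne_top _)

lemma probWUY_zero_t (ys : Fin 0 → Y) (w : W) (u : U) :
    probWUY Qf Qb G2 u1 φ 0 ys w u =
      if u1 = u then (Fintype.card W : ℝ≥0∞)⁻¹ else 0 := by
  simp [probWUY, jointP_zero, mem, Finset.sum_const, Finset.card_univ]

lemma beliefs_eq [Nonempty W] : ∀ {t : ℕ} (ys : Fin t → Y),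
    0 < probY Qf Qb G2 u1 φ t ys →
    (∀ w, (beliefs Qf Qb G2 u1 φ t ys).1 w =
        probWY Qf Qb G2 u1 φ t ys w / probY Qf Qb G2 u1 φ t ys) ∧
    (∀ w u, (beliefs Qf Qb G2 u1 φ t ys).2 w u =
        probWUY Qf Qb G2 u1 φ t ys w u / probWY Qf Qb G2 u1 φ t ys w) := by
  intro t
  induction t with
  | zero =>
      intro ys _
      constructor
      · intro w
        rw [probY_zero_t, probWY_zero_t, div_one]
        rfl
      · intro w u
        rw [probWUY_zero_t, probWY_zero_t]
        show (if u = u1 then (1:ℝ≥0∞) else 0) = _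
        by_cases h : u = u1
        · rw [if_pos h, if_pos h.symm,
            ENNReal.div_self (ENNReal.inv_ne_zero.2 (ENNReal.natCast_ne_top _))
              (card_inv_ne_top)]
        · rw [if_neg h, if_neg (fun h' => h h'.symm), ENNReal.zero_div]
  | succ t ih =>
      intro ys hS'
      rw [← Fin.snoc_init_self ys] at hS' ⊢
      set ys' := Fin.init ys with hys'
      set y := ys (Fin.last t) with hy
      have hSle := probY_snoc_le Qf Qb G2 u1 φ ys' y
      have hS : 0 < probY Qf Qb G2 u1 φ t ys' := lt_of_lt_of_le hS' hSle
      obtain ⟨hπ, hη⟩ := ih ys' hS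
      have hS0 : probY Qf Qb G2 u1 φ t ys' ≠ 0 := hS.ne'
      have hStop : probY Qf Qb G2 u1 φ t ys' ≠ ⊤ := probY_ne_top Qf Qb G2 u1 φ ys'
      have hbel : beliefs Qf Qb G2 u1 φ (t + 1) (Fin.snoc ys' y) =
          Fb Qf Qb G2 (beliefs Qf Qb G2 u1 φ t ys') (φ t) y :=
        beliefs_snoc Qf Qb G2 u1 φ ys' y
      -- notation
      have hμ0 : ∀ w, probWY Qf Qb G2 u1 φ t ys' w = 0 →
          ∀ u, probWUY Qf Qb G2 u1 φ t ys' w u = 0 := fun w hw u =>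
        le_antisymm ((probWUY_le Qf Qb G2 u1 φ ys' w u).trans hw.le) zero_le
      have hρ'0 : ∀ w, probWY Qf Qb G2 u1 φ t ys' w = 0 →
          probWY Qf Qb G2 u1 φ (t + 1) (Fin.snoc ys' y) w = 0 := by
        intro w hw
        rw [probWY_snoc]
        refine Finset.sum_eq_zero fun u _ => ?_
        rw [hμ0 w hw u, zero_mul]
      -- the key computation for `F1`'s numerator terms and `F2`'s denominator
      have hA : ∀ w, (∑ u : U, (beliefs Qf Qb G2 u1 φ t ys').2 w u * Qf (φ t (w, u)) y) =
          probWY Qf Qb G2 u1 φ (t + 1) (Fin.snoc ys' y) w /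
            probWY Qf Qb G2 u1 φ t ys' w := by
        intro w
        by_cases hρ : probWY Qf Qb G2 u1 φ t ys' w = 0
        · rw [hρ'0 w hρ, ENNReal.zero_div]
          refine Finset.sum_eq_zero fun u _ => ?_
          rw [hη w u, hμ0 w hρ u, ENNReal.zero_div, zero_mul]
        · rw [probWY_snoc]
          rw [Finset.sum_congr rfl fun u (_ : u ∈ univ) => by
            rw [hη w u, div_eq_mul_inv, mul_right_comm]]
          rw [← Finset.sum_mul, ← div_eq_mul_inv]
      have claim1 : ∀ w, (beliefs Qf Qb G2 u1 φ t ys').1 w *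
          (∑ u : U, (beliefs Qf Qb G2 u1 φ t ys').2 w u * Qf (φ t (w, u)) y) =
          probWY Qf Qb G2 u1 φ (t + 1) (Fin.snoc ys' y) w / probY Qf Qb G2 u1 φ t ys' := by
        intro w
        rw [hA w, hπ w]
        by_cases hρ : probWY Qf Qb G2 u1 φ t ys' w = 0
        · simp [hρ, hρ'0 w hρ]
        · have hρtop : probWY Qf Qb G2 u1 φ t ys' w ≠ ⊤ := probWY_ne_top Qf Qb G2 u1 φ ys' w
          rw [div_eq_mul_inv, div_eq_mul_inv, div_eq_mul_inv]
          have : probWY Qf Qb G2 u1 φ t ys' w * (probY Qf Qb G2 u1 φ t ys')⁻¹ *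
              (probWY Qf Qb G2 u1 φ (t + 1) (Fin.snoc ys' y) w *
                (probWY Qf Qb G2 u1 φ t ys' w)⁻¹) =
              probWY Qf Qb G2 u1 φ t ys' w * (probWY Qf Qb G2 u1 φ t ys' w)⁻¹ *
              (probWY Qf Qb G2 u1 φ (t + 1) (Fin.snoc ys' y) w *
                (probY Qf Qb G2 u1 φ t ys')⁻¹) := by ring
          rw [this, ENNReal.mul_inv_cancel hρ hρtop, one_mul]
      constructor
      · intro w
        rw [hbel]
        show F1 Qf (beliefs Qf Qb G2 u1 φ t ys') (φ t) y w = _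
        unfold F1
        rw [claim1 w]
        rw [Finset.sum_congr rfl fun w' (_ : w' ∈ univ) => claim1 w']
        have hsum : (∑ w' : W, probWY Qf Qb G2 u1 φ (t + 1) (Fin.snoc ys' y) w' /
            probY Qf Qb G2 u1 φ t ys') =
            probY Qf Qb G2 u1 φ (t + 1) (Fin.snoc ys' y) / probY Qf Qb G2 u1 φ t ys' := by
          rw [probY_eq_sum Qf Qb G2 u1 φ (t + 1) (Fin.snoc ys' y)]
          simp only [div_eq_mul_inv]
          rw [Finset.sum_mul]
        rw [hsum]
        exact ennreal_div_div hS0 hStop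
      · intro w u'
        rw [hbel]
        show F2 Qf Qb G2 (beliefs Qf Qb G2 u1 φ t ys') (φ t) y w u' = _
        unfold F2
        rw [hA w]
        by_cases hρ : probWY Qf Qb G2 u1 φ t ys' w = 0
        · have hρ' := hρ'0 w hρ
          have hμ' : probWUY Qf Qb G2 u1 φ (t + 1) (Fin.snoc ys' y) w u' = 0 :=
            le_antisymm ((probWUY_le Qf Qb G2 u1 φ _ w u').trans hρ'.le) zero_le
          rw [hρ', hμ']
          rw [Finset.sum_eq_zero fun u (_ : u ∈ univ) => Finset.sum_eq_zero
            fun z (_ : z ∈ univ) => by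
              rw [hη w u, hμ0 w hρ u, ENNReal.zero_div, zero_mul, zero_mul, zero_mul]]
          simp
        · have hρtop : probWY Qf Qb G2 u1 φ t ys' w ≠ ⊤ := probWY_ne_top Qf Qb G2 u1 φ ys' w
          have hnum : (∑ u : U, ∑ z : Z, (beliefs Qf Qb G2 u1 φ t ys').2 w u *
              Qf (φ t (w, u)) y * Qb y z * (if u' = G2 u (φ t) z w then 1 else 0)) =
              probWUY Qf Qb G2 u1 φ (t + 1) (Fin.snoc ys' y) w u' /
                probWY Qf Qb G2 u1 φ t ys' w := by
            rw [probWUY_snoc, div_eq_mul_inv, Finset.sum_mul]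
            refine Finset.sum_congr rfl fun u _ => ?_
            rw [Finset.sum_mul]
            refine Finset.sum_congr rfl fun z _ => ?_
            rw [hη w u]
            by_cases hg : u' = G2 u (φ t) z w
            · rw [if_pos hg, if_pos hg.symm, mul_one, div_eq_mul_inv]
              ring
            · rw [if_neg hg, if_neg fun h => hg h.symm, mul_zero, zero_mul]
          rw [hnum]
          exact ennreal_div_div hρ hρtop


/-- Unnormalized sender belief: `ust t w zs b = P(W = w, Z_{1:t} = zs, B_t = b)`. -/
noncomputable def ust (t : ℕ) (w : W) (zs : Fin t → Z) : Belief W U → ℝ≥0∞ := fun b =>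
  ∑ ys : Fin t → Y,
    if beliefs Qf Qb G2 u1 φ t ys = b then jointP Qf Qb G2 u1 φ t w ys zs else 0

lemma tsum_ust_mul (t : ℕ) (w : W) (zs : Fin t → Z) (g : Belief W U → ℝ≥0∞) :
    ∑' b : Belief W U, ust Qf Qb G2 u1 φ t w zs b * g b =
      ∑ ys : Fin t → Y, jointP Qf Qb G2 u1 φ t w ys zs * g (beliefs Qf Qb G2 u1 φ t ys) := by
  rw [tsum_eq_sum (s := Finset.image (beliefs Qf Qb G2 u1 φ t) Finset.univ)
    (fun b hb => by
      have h0 : ust Qf Qb G2 u1 φ t w zs b = 0 :=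
        Finset.sum_eq_zero fun ys _ => if_neg
          (fun h => hb (by rw [← h]; exact Finset.mem_image_of_mem _ (Finset.mem_univ ys)))
      rw [h0, zero_mul])]
  unfold ust
  simp only [Finset.sum_mul, ite_mul, zero_mul]
  rw [Finset.sum_comm]
  refine Finset.sum_congr rfl fun ys _ => ?_
  rw [Finset.sum_ite_eq (Finset.image (beliefs Qf Qb G2 u1 φ t) Finset.univ)
    (beliefs Qf Qb G2 u1 φ t ys) (fun b => jointP Qf Qb G2 u1 φ t w ys zs * g b)]
  rw [if_pos (Finset.mem_image_of_mem _ (Finset.mem_univ ys))]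

lemma G1_smul (σ : Belief W U → ℝ≥0∞) (c : ℝ≥0∞) (φ' : W × U → X) (z : Z) (u : U) (w : W) :
    G1 Qf Qb G2 (fun b => c * σ b) φ' z u w = fun b => c * G1 Qf Qb G2 σ φ' z u w b := by
  funext b
  unfold G1
  rw [div_eq_mul_inv, div_eq_mul_inv]
  have h1 : (∑' p : Belief W U, c * σ p * ∑ y : Y,
      Qf (φ' (w, u)) y * Qb y z * (if b = Fb Qf Qb G2 p φ' y then 1 else 0)) =
      c * ∑' p : Belief W U, σ p * ∑ y : Y,
        Qf (φ' (w, u)) y * Qb y z * (if b = Fb Qf Qb G2 p φ' y then 1 else 0) := by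
    simp only [mul_assoc]
    exact ENNReal.tsum_mul_left
  rw [h1, mul_assoc]

lemma Vk_smul [Nonempty X] :
    ∀ (k : ℕ) (σ : Belief W U → ℝ≥0∞) (c : ℝ≥0∞), c ≠ ⊤ → ∀ (u : U) (w : W),
      Vk Qf Qb G2 k (fun b => c * σ b) u w = c * Vk Qf Qb G2 k σ u w := by
  intro k
  induction k with
  | zero =>
      intro σ c hc u w
      show (∑' p : Belief W U, c * σ p * _) = c * ∑' p : Belief W U, σ p * _
      simp only [mul_assoc]
      exact ENNReal.tsum_mul_left
  | succ k ih =>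
      intro σ c hc u w
      show (⨅ φ' : W × U → X, ∑ y : Y, ∑ z : Z, _) = c * ⨅ φ' : W × U → X, _
      rw [ENNReal.mul_iInf' (fun h => absurd h hc) (fun _ => inferInstance)]
      refine iInf_congr fun φ' => ?_
      rw [Finset.mul_sum]
      refine Finset.sum_congr rfl fun y _ => ?_
      rw [Finset.mul_sum]
      refine Finset.sum_congr rfl fun z _ => ?_
      rw [G1_smul, ih _ c hc, mul_left_comm]

lemma Vk_zero_fun [Nonempty X] (k : ℕ) (u : U) (w : W) :
    Vk Qf Qb G2 k (fun _ => 0) u w = 0 := by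
  have h := Vk_smul Qf Qb G2 k (fun _ => (1 : ℝ≥0∞)) 0 (by simp) u w
  simpa using h

lemma sum_fin_zero {α : Type*} [Fintype α] (g : (Fin 0 → α) → ℝ≥0∞) (x0 : Fin 0 → α) :
    ∑ f : Fin 0 → α, g f = g x0 := by
  rw [Fintype.sum_unique]
  exact congrArg g (Subsingleton.elim _ _)

lemma ust_zero_t (w : W) (zs : Fin 0 → Z) :
    ust Qf Qb G2 u1 φ 0 w zs = fun b => (Fintype.card W : ℝ≥0∞)⁻¹ * σ0 u1 b := by
  funext b
  unfold ust σ0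
  rw [sum_fin_zero _ (fun i => i.elim0)]
  show (if b0 u1 = b then jointP Qf Qb G2 u1 φ 0 w _ _ else 0) = _
  rw [jointP_zero]
  by_cases hb : b = b0 u1
  · rw [if_pos hb.symm, if_pos hb, mul_one]
  · rw [if_neg (fun h => hb h.symm), if_neg hb, mul_zero]

lemma G1_ust (t : ℕ) (w : W) (zs : Fin t → Z) (z : Z) :
    G1 Qf Qb G2 (ust Qf Qb G2 u1 φ t w zs) (φ t) z (mem G2 u1 φ w t zs) w = fun b =>
      ust Qf Qb G2 u1 φ (t + 1) w (Fin.snoc zs z) b /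
        ∑ y : Y, Qf (φ t (w, mem G2 u1 φ w t zs)) y * Qb y z := by
  funext b
  unfold G1
  rw [tsum_ust_mul]
  congr 1
  conv_rhs => rw [ust]
  rw [sum_snoc]
  refine Finset.sum_congr rfl fun ys _ => ?_
  rw [Finset.mul_sum]
  refine Finset.sum_congr rfl fun y _ => ?_
  rw [beliefs_snoc, jointP_snoc]
  by_cases hb : b = Fb Qf Qb G2 (beliefs Qf Qb G2 u1 φ t ys) (φ t) y
  · rw [if_pos hb, if_pos hb.symm, mul_one]
  · rw [if_neg hb, if_neg (fun h => hb h.symm), mul_zero, mul_zero]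

lemma den_le_one (x : X) (z : Z) : (∑ y : Y, Qf x y * Qb y z) ≤ 1 := by
  calc (∑ y : Y, Qf x y * Qb y z) ≤ ∑ y : Y, Qf x y * 1 :=
        Finset.sum_le_sum fun y _ => mul_le_mul_right (PMF.coe_le_one _ _) _
    _ = 1 := by simp only [mul_one]; exact sum_pmf_one (Qf x)

lemma Vk_ust_succ [Nonempty X] (k t : ℕ) (w : W) (zs : Fin t → Z) (z : Z) :
    (∑ y : Y, Qf (φ t (w, mem G2 u1 φ w t zs)) y * Qb y z) *
        Vk Qf Qb G2 k (G1 Qf Qb G2 (ust Qf Qb G2 u1 φ t w zs) (φ t) z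
          (mem G2 u1 φ w t zs) w) (G2 (mem G2 u1 φ w t zs) (φ t) z w) w =
      Vk Qf Qb G2 k (ust Qf Qb G2 u1 φ (t + 1) w (Fin.snoc zs z))
        (mem G2 u1 φ w (t + 1) (Fin.snoc zs z)) w := by
  rw [mem_snoc, G1_ust]
  set den := ∑ y : Y, Qf (φ t (w, mem G2 u1 φ w t zs)) y * Qb y z with hden
  by_cases h0 : den = 0
  · have hust0 : ust Qf Qb G2 u1 φ (t + 1) w (Fin.snoc zs z) = fun _ => 0 := by
      funext b
      refine Finset.sum_eq_zero fun ys _ => ?_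
      have hy : ∀ y : Y, Qf (φ t (w, mem G2 u1 φ w t zs)) y * Qb y z = 0 := by
        intro y
        have := (Finset.sum_eq_zero_iff.1 h0) y (Finset.mem_univ y)
        exact this
      rw [← Fin.snoc_init_self ys, jointP_snoc, hy, mul_zero]
      simp
    rw [hust0, h0, zero_mul]
    rw [Vk_zero_fun]
  · have htop : den ≠ ⊤ := ne_top_of_le_ne_top (by simp) (den_le_one Qf Qb _ z)
    have hfun : (fun b => ust Qf Qb G2 u1 φ (t + 1) w (Fin.snoc zs z) b / den) =
        fun b => den⁻¹ * ust Qf Qb G2 u1 φ (t + 1) w (Fin.snoc zs z) b := by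
      funext b; rw [div_eq_mul_inv, mul_comm]
    rw [hfun, Vk_smul Qf Qb G2 k _ den⁻¹ (ENNReal.inv_ne_top.2 h0), ← mul_assoc,
      ENNReal.mul_inv_cancel h0 htop, one_mul]

lemma Vk_step [Nonempty X] (k t : ℕ) (w : W) (zs : Fin t → Z) :
    Vk Qf Qb G2 (k + 1) (ust Qf Qb G2 u1 φ t w zs) (mem G2 u1 φ w t zs) w ≤
      ∑ z : Z, Vk Qf Qb G2 k (ust Qf Qb G2 u1 φ (t + 1) w (Fin.snoc zs z))
        (mem G2 u1 φ w (t + 1) (Fin.snoc zs z)) w := by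
  have h1 : Vk Qf Qb G2 (k + 1) (ust Qf Qb G2 u1 φ t w zs) (mem G2 u1 φ w t zs) w ≤
      ∑ y : Y, ∑ z : Z, Qf (φ t (w, mem G2 u1 φ w t zs)) y * Qb y z *
        Vk Qf Qb G2 k (G1 Qf Qb G2 (ust Qf Qb G2 u1 φ t w zs) (φ t) z
          (mem G2 u1 φ w t zs) w) (G2 (mem G2 u1 φ w t zs) (φ t) z w) w :=
    iInf_le _ (φ t)
  refine h1.trans (le_of_eq ?_)
  rw [Finset.sum_comm]
  refine Finset.sum_congr rfl fun z _ => ?_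
  rw [← Vk_ust_succ Qf Qb G2 u1 φ k t w zs z, ← Finset.sum_mul]

lemma ust_chain [Nonempty X] (w : W) : ∀ (k t : ℕ),
    (∑ zs : Fin t → Z, Vk Qf Qb G2 k (ust Qf Qb G2 u1 φ t w zs)
        (mem G2 u1 φ w t zs) w) ≤
      ∑ zs : Fin (t + k) → Z, Vk Qf Qb G2 0 (ust Qf Qb G2 u1 φ (t + k) w zs)
        (mem G2 u1 φ w (t + k) zs) w := by
  intro k
  induction k with
  | zero => intro t; exact le_refl _
  | succ k ih =>
      intro t
      have h2 := ih (t + 1)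
      rw [show t + 1 + k = t + (k + 1) from by omega] at h2
      refine le_trans ?_ h2
      rw [sum_snoc]
      exact Finset.sum_le_sum fun zs _ => Vk_step Qf Qb G2 u1 φ k t w zs


lemma Vk0_ust (t : ℕ) (w : W) (zs : Fin t → Z) (u : U) (w' : W) :
    Vk Qf Qb G2 0 (ust Qf Qb G2 u1 φ t w zs) u w' =
      ∑ ys : Fin t → Y, jointP Qf Qb G2 u1 φ t w ys zs *
        (1 - univ.sup fun w'' : W => (beliefs Qf Qb G2 u1 φ t ys).1 w'') :=
  tsum_ust_mul Qf Qb G2 u1 φ t w zs (fun p => 1 - univ.sup fun w'' : W => p.1 w'')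

lemma vk_init [Nonempty W] [Nonempty X] (n : ℕ) (w : W) :
    (∑ zs : Fin 0 → Z, Vk Qf Qb G2 n (ust Qf Qb G2 u1 φ 0 w zs)
        (mem G2 u1 φ w 0 zs) w) =
      (Fintype.card W : ℝ≥0∞)⁻¹ * Vk Qf Qb G2 n (σ0 u1) u1 w := by
  rw [sum_fin_zero _ (fun i => i.elim0), ust_zero_t]
  exact Vk_smul Qf Qb G2 n (σ0 u1) _ card_inv_ne_top u1 w

lemma sup_div_const (f : W → ℝ≥0∞) (S : ℝ≥0∞) :
    (univ.sup fun w : W => f w / S) = (univ.sup fun w : W => f w) / S := by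
  refine (Finset.comp_sup_eq_sup_comp (· / S) (fun a b => ?_) ?_).symm
  · simp only [div_eq_mul_inv]
    exact mul_left_mono.map_max
  · simp

end Helpers

/-- **Dynamic-programming lower bound on the error probability of any Markov encoder**
(Statement 8).  For every choice of Markov encoding functions `φ_1, …, φ_n`, the error
probability with MAP decoding equals `E[1 - max_w P(W = w | Y_{1:n})]` and is at least
`(1/|𝒲|) Σ_w V_1(σ₀, u₁, w)`, where `V_1 = Vk n` and `σ₀` is the point mass at
(uniform on `𝒲`, `w ↦` point mass at `u₁`). -/
theorem dp_lower_bound [Nonempty W] [Nonempty X] [Nonempty Y] [Nonempty Z] [Nonempty U]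
    (Qf : X → PMF Y) (Qb : Y → PMF Z)
    (G2 : U → (W × U → X) → Z → W → U) (u1 : U) (φ : ℕ → W × U → X) (n : ℕ)
    (gMAP : (Fin n → Y) → W)
    (hMAP : ∀ (ys : Fin n → Y) (w : W),
      probWY Qf Qb G2 u1 φ n ys w ≤ probWY Qf Qb G2 u1 φ n ys (gMAP ys)) :
    (∑ w : W, ∑ ys : Fin n → Y, ∑ zs : Fin n → Z,
        if gMAP ys ≠ w then jointP Qf Qb G2 u1 φ n w ys zs else 0) =
      (∑ ys ∈ univ.filter (fun ys : Fin n → Y => 0 < probY Qf Qb G2 u1 φ n ys),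
        probY Qf Qb G2 u1 φ n ys *
          (1 - univ.sup fun w : W =>
            probWY Qf Qb G2 u1 φ n ys w / probY Qf Qb G2 u1 φ n ys)) ∧
    (Fintype.card W : ℝ≥0∞)⁻¹ * (∑ w : W, Vk Qf Qb G2 n (σ0 u1) u1 w) ≤
      ∑ ys ∈ univ.filter (fun ys : Fin n → Y => 0 < probY Qf Qb G2 u1 φ n ys),
        probY Qf Qb G2 u1 φ n ys *
          (1 - univ.sup fun w : W =>
            probWY Qf Qb G2 u1 φ n ys w / probY Qf Qb G2 u1 φ n ys) := by
  -- MAP decoding attains the sup of the posterior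
  have hMAPsup : ∀ ys : Fin n → Y,
      (univ.sup fun w : W => probWY Qf Qb G2 u1 φ n ys w) =
        probWY Qf Qb G2 u1 φ n ys (gMAP ys) := fun ys =>
    le_antisymm (Finset.sup_le fun w _ => hMAP ys w) (Finset.le_sup (Finset.mem_univ _))
  have herr : ∀ ys : Fin n → Y,
      (∑ w : W, if gMAP ys ≠ w then probWY Qf Qb G2 u1 φ n ys w else 0) =
        probY Qf Qb G2 u1 φ n ys - probWY Qf Qb G2 u1 φ n ys (gMAP ys) := by
    intro ys
    refine ENNReal.eq_sub_of_add_eq (probWY_ne_top Qf Qb G2 u1 φ ys (gMAP ys)) ?_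
    rw [← Finset.sum_filter, Finset.filter_ne,
      Finset.sum_erase_add _ _ (Finset.mem_univ _)]
    exact (probY_eq_sum Qf Qb G2 u1 φ n ys).symm
  -- the terms of the filtered sum
  have hterm : ∀ ys ∈ univ.filter (fun ys : Fin n → Y => 0 < probY Qf Qb G2 u1 φ n ys),
      probY Qf Qb G2 u1 φ n ys *
          (1 - univ.sup fun w : W =>
            probWY Qf Qb G2 u1 φ n ys w / probY Qf Qb G2 u1 φ n ys) =
        probY Qf Qb G2 u1 φ n ys - probWY Qf Qb G2 u1 φ n ys (gMAP ys) := by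
    intro ys hys
    have hpos : 0 < probY Qf Qb G2 u1 φ n ys := (Finset.mem_filter.1 hys).2
    have hS0 : probY Qf Qb G2 u1 φ n ys ≠ 0 := hpos.ne'
    have hStop : probY Qf Qb G2 u1 φ n ys ≠ ⊤ := probY_ne_top Qf Qb G2 u1 φ ys
    rw [sup_div_const, hMAPsup ys, ENNReal.mul_sub (fun _ _ => hStop), mul_one,
      ENNReal.mul_div_cancel hS0 hStop]
  have hfilter : ∀ ys ∈ (univ : Finset (Fin n → Y)),
      probY Qf Qb G2 u1 φ n ys - probWY Qf Qb G2 u1 φ n ys (gMAP ys) ≠ 0 →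
        0 < probY Qf Qb G2 u1 φ n ys := by
    intro ys _ hne
    rcases eq_or_lt_of_le (zero_le : 0 ≤ probY Qf Qb G2 u1 φ n ys) with h | h
    · exfalso
      apply hne
      have : probWY Qf Qb G2 u1 φ n ys (gMAP ys) = 0 :=
        le_antisymm ((probWY_le_probY Qf Qb G2 u1 φ ys (gMAP ys)).trans h.ge) zero_le
      rw [← h, this, tsub_zero]
    · exact h
  have key1 : (∑ w : W, ∑ ys : Fin n → Y, ∑ zs : Fin n → Z,
      if gMAP ys ≠ w then jointP Qf Qb G2 u1 φ n w ys zs else 0) =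
      (∑ ys ∈ univ.filter (fun ys : Fin n → Y => 0 < probY Qf Qb G2 u1 φ n ys),
        probY Qf Qb G2 u1 φ n ys *
          (1 - univ.sup fun w : W =>
            probWY Qf Qb G2 u1 φ n ys w / probY Qf Qb G2 u1 φ n ys)) := by
    rw [Finset.sum_congr rfl hterm, Finset.sum_filter_of_ne hfilter, Finset.sum_comm]
    refine Finset.sum_congr rfl fun ys _ => ?_
    rw [← herr ys]
    refine Finset.sum_congr rfl fun w _ => ?_
    split_ifs with h
    · rfl
    · exact Finset.sum_const_zero
  refine ⟨key1, ?_⟩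
  -- Part 2: the dynamic-programming lower bound
  calc (Fintype.card W : ℝ≥0∞)⁻¹ * (∑ w : W, Vk Qf Qb G2 n (σ0 u1) u1 w)
      = ∑ w : W, (Fintype.card W : ℝ≥0∞)⁻¹ * Vk Qf Qb G2 n (σ0 u1) u1 w :=
        Finset.mul_sum _ _ _
    _ = ∑ w : W, ∑ zs : Fin 0 → Z, Vk Qf Qb G2 n (ust Qf Qb G2 u1 φ 0 w zs)
          (mem G2 u1 φ w 0 zs) w :=
        Finset.sum_congr rfl fun w _ => (vk_init Qf Qb G2 u1 φ n w).symm
    _ ≤ ∑ w : W, ∑ zs : Fin n → Z, Vk Qf Qb G2 0 (ust Qf Qb G2 u1 φ n w zs)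
          (mem G2 u1 φ w n zs) w := by
        refine Finset.sum_le_sum fun w _ => ?_
        have h := ust_chain Qf Qb G2 u1 φ w n 0
        rwa [Nat.zero_add] at h
    _ = ∑ w : W, ∑ zs : Fin n → Z, ∑ ys : Fin n → Y,
          jointP Qf Qb G2 u1 φ n w ys zs *
            (1 - univ.sup fun w'' : W => (beliefs Qf Qb G2 u1 φ n ys).1 w'') :=
        Finset.sum_congr rfl fun w _ => Finset.sum_congr rfl fun zs _ =>
          Vk0_ust Qf Qb G2 u1 φ n w zs _ w
    _ = ∑ ys : Fin n → Y, probY Qf Qb G2 u1 φ n ys *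
          (1 - univ.sup fun w'' : W => (beliefs Qf Qb G2 u1 φ n ys).1 w'') := by
        have swap1 : ∀ w : W, (∑ zs : Fin n → Z, ∑ ys : Fin n → Y,
            jointP Qf Qb G2 u1 φ n w ys zs *
              (1 - univ.sup fun w'' : W => (beliefs Qf Qb G2 u1 φ n ys).1 w'')) =
            ∑ ys : Fin n → Y, ∑ zs : Fin n → Z, jointP Qf Qb G2 u1 φ n w ys zs *
              (1 - univ.sup fun w'' : W => (beliefs Qf Qb G2 u1 φ n ys).1 w'') :=
          fun w => Finset.sum_comm
        rw [Finset.sum_congr rfl fun (w : W) (_ : w ∈ univ) => swap1 w]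
        rw [Finset.sum_comm]
        refine Finset.sum_congr rfl fun ys _ => ?_
        rw [probY_eq_sum, Finset.sum_mul]
        refine Finset.sum_congr rfl fun w _ => ?_
        rw [probWY, Finset.sum_mul]
    _ = ∑ ys ∈ univ.filter (fun ys : Fin n → Y => 0 < probY Qf Qb G2 u1 φ n ys),
          probY Qf Qb G2 u1 φ n ys *
            (1 - univ.sup fun w'' : W => (beliefs Qf Qb G2 u1 φ n ys).1 w'') := by
        refine (Finset.sum_filter_of_ne fun ys _ hne => ?_).symm
        rcases eq_or_lt_of_le (zero_le : 0 ≤ probY Qf Qb G2 u1 φ n ys) with h | h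
        · exact absurd (by rw [← h, zero_mul]) hne
        · exact h
    _ = ∑ ys ∈ univ.filter (fun ys : Fin n → Y => 0 < probY Qf Qb G2 u1 φ n ys),
          probY Qf Qb G2 u1 φ n ys *
            (1 - univ.sup fun w : W =>
              probWY Qf Qb G2 u1 φ n ys w / probY Qf Qb G2 u1 φ n ys) := by
        refine Finset.sum_congr rfl fun ys hys => ?_
        have hpos : 0 < probY Qf Qb G2 u1 φ n ys := (Finset.mem_filter.1 hys).2
        obtain ⟨hπ, -⟩ := beliefs_eq Qf Qb G2 u1 φ ys hpos
        rw [Finset.sup_congr rfl fun w _ => hπ w]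

end NoisyFeedback
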